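/- Let m, h ∈ ℕ with 1 ≤ h ≤ m - 1 and S = ⟨m, m+1, ..., m+h⟩. Then σ attains its maximum over S ∩ [0, c(S)] at λm where λ := ⌈(m-2)/(2h)⌉, and σ(λm) = λ(m/2 - 1) - h·C(λ,2), where C(λ,2) = λ(λ-1)/2. -/

import Mathlib

/-- σ(x) = x/2 - |S ∩ [0,x]| + 1 -/
noncomputable def sig (S : Set ℕ) (x : ℕ) : ℚ :=
  (x : ℚ) / 2 - ((S ∩ Set.Icc 0 x).ncard : ℚ) + 1

/-- ngCond: least c with [c,∞) ⊆ S -/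
noncomputable def ngCond (S : Set ℕ) : ℕ := sInf {k : ℕ | ∀ n, k ≤ n → n ∈ S}



def triN : ℕ → ℕ
  | 0 => 0
  | (k+1) => triN k + k

lemma triN_cast (k : ℕ) : (triN k : ℚ) = (k : ℚ) * ((k : ℚ) - 1) / 2 := by
  induction k with
  | zero => simp [triN]
  | succ n ih => simp only [triN]; push_cast [ih]; ring

lemma memS (m h n : ℕ) :
    n ∈ (AddSubmonoid.closure (Set.Icc m (m + h)) : Set ℕ) ↔
      ∃ k, k * m ≤ n ∧ n ≤ k * (m + h) := by
  constructor
  · intro hn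
    induction hn using AddSubmonoid.closure_induction with
    | mem x hx => exact ⟨1, by simpa using hx.1, by simpa using hx.2⟩
    | zero => exact ⟨0, by simp, by simp⟩
    | add a b ha hb iha ihb =>
        obtain ⟨k1, h1, h2⟩ := iha
        obtain ⟨k2, h3, h4⟩ := ihb
        exact ⟨k1 + k2, by nlinarith, by nlinarith⟩
  · rintro ⟨k, hk1, hk2⟩
    obtain ⟨j, hj, rfl⟩ : ∃ j, j ≤ k * h ∧ n = k * m + j :=
      ⟨n - k * m, by have : k * (m + h) = k * m + k * h := by ring
                     omega, by omega⟩
    clear hk1 hk2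
    induction k generalizing j with
    | zero =>
        have : j = 0 := by omega
        subst this; simpa using AddSubmonoid.zero_mem _
    | succ k ih =>
        have e : (k+1) * h = k * h + h := by ring
        have h1 : m + min j h ∈ Set.Icc m (m + h) := ⟨by omega, by omega⟩
        have h2 : k * m + (j - min j h) ∈
            AddSubmonoid.closure (Set.Icc m (m + h)) := by
          refine ih _ ?_
          have e : (k+1) * h = k * h + h := by ring
          omega
        have he : (k+1) * m + j = (m + min j h) + (k * m + (j - min j h)) := by
          have := min_le_left j h; ring_nf; omega
        rw [he]
        exact AddSubmonoid.add_mem _ (AddSubmonoid.subset_closure h1) h2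

lemma canonRep (m h n : ℕ) (hm : 1 ≤ m) (hn : 1 ≤ n)
    (hmem : n ∈ (AddSubmonoid.closure (Set.Icc m (m + h)) : Set ℕ)) :
    1 ≤ n / m ∧ (n / m) * m ≤ n ∧ n ≤ (n / m) * (m + h) := by
  obtain ⟨k, hk1, hk2⟩ := (memS m h n).1 hmem
  have hk0 : 1 ≤ k := by
    rcases Nat.eq_zero_or_pos k with rfl | hp
    · omega
    · exact hp
  have hk : k ≤ n / m := (Nat.le_div_iff_mul_le (by omega)).2 (by linarith [hk1])
  refine ⟨le_trans hk0 hk, Nat.div_mul_le_self n m, le_trans hk2 (Nat.mul_le_mul_right _ hk)⟩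

lemma countLemma (m h q : ℕ) (hm : 2 ≤ m) (hh : 1 ≤ h)
    (hq1 : m - 1 ≤ q * h) (hq2 : ∀ i < q, i * h ≤ m - 2) :
    ∀ k, ∀ j, k ≤ q → j ≤ k * h → k * m + j ≤ q * m →
      ((AddSubmonoid.closure (Set.Icc m (m + h)) : Set ℕ) ∩ Set.Icc 0 (k * m + j)).ncard
        = k + 1 + h * triN k + j := by
  have hq0 : 1 ≤ q := by
    rcases Nat.eq_zero_or_pos q with rfl | hp
    · simp at hq1; omega
    · exact hp
  intro k
  induction k with
  | zero =>
      intro j _ hj _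
      have hj0 : j = 0 := by omega
      subst hj0
      have : (AddSubmonoid.closure (Set.Icc m (m + h)) : Set ℕ) ∩ Set.Icc 0 0 = {0} := by
        ext n
        simp only [Set.mem_inter_iff, Set.mem_Icc, Set.mem_singleton_iff]
        constructor
        · rintro ⟨_, _, hn⟩; omega
        · rintro rfl
          exact ⟨AddSubmonoid.zero_mem _, le_refl _, le_refl _⟩
      have e0 : 0 * m + 0 = 0 := by omega
      rw [e0, this]; simp [triN]
  | succ k ih =>
      intro j hkq hj hle
      have hkq' : k < q := hkq
      have hkh : k * h ≤ m - 2 := hq2 k (by omega)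
      have ekh : (k+1) * h = k * h + h := by ring
      have ekm : (k+1) * m = k * m + m := by ring
      -- previous full block bound
      have hprev : k * m + k * h ≤ q * m := by
        have h1 : k * m + m ≤ q * m := by
          calc k * m + m = (k+1) * m := by ring
          _ ≤ q * m := Nat.mul_le_mul_right _ hkq'
        omega
      have ihv := ih (k * h) (by omega) (le_refl _) hprev
      -- set splitting
      have hsplit :
          (AddSubmonoid.closure (Set.Icc m (m + h)) : Set ℕ) ∩ Set.Icc 0 ((k+1) * m + j)
          = ((AddSubmonoid.closure (Set.Icc m (m + h)) : Set ℕ) ∩ Set.Icc 0 (k * m + k * h))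
            ∪ Set.Icc ((k+1) * m) ((k+1) * m + j) := by
        ext n
        simp only [Set.mem_inter_iff, Set.mem_Icc, Set.mem_union]
        constructor
        · rintro ⟨hnS, -, hn2⟩
          by_cases hsmall : n ≤ k * m + k * h
          · exact Or.inl ⟨hnS, Nat.zero_le _, hsmall⟩
          · right
            push_neg at hsmall
            have hn1 : 1 ≤ n := by omega
            rcases Nat.lt_or_ge n (q * m) with hlt | hge
            · obtain ⟨hd1, hd2, hd3⟩ := canonRep m h n (by omega) hn1 hnS
              have hdk : k + 1 ≤ n / m := by
                by_contra hc
                push_neg at hc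
                have : n / m ≤ k := by omega
                have : (n/m) * (m+h) ≤ k * (m+h) := Nat.mul_le_mul_right _ this
                have e2 : k * (m + h) = k * m + k * h := by ring
                omega
              have : (k+1) * m ≤ (n/m) * m := Nat.mul_le_mul_right _ hdk
              omega
            · have : n = q * m := by omega
              subst this
              constructor
              · exact Nat.mul_le_mul_right _ hkq
              · omega
        · rintro (⟨hnS, -, hn2⟩ | ⟨hn1, hn2⟩)
          · exact ⟨hnS, Nat.zero_le _, by omega⟩
          · refine ⟨(memS m h n).2 ⟨k+1, hn1, ?_⟩, Nat.zero_le _, hn2⟩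
            have : (k+1) * (m + h) = (k+1) * m + k * h + h := by ring
            omega
      rw [hsplit]
      have hfin1 : ((AddSubmonoid.closure (Set.Icc m (m + h)) : Set ℕ)
          ∩ Set.Icc 0 (k * m + k * h)).Finite :=
        Set.Finite.subset (Set.finite_Icc 0 (k * m + k * h)) Set.inter_subset_right
      have hfin2 : (Set.Icc ((k+1) * m) ((k+1) * m + j)).Finite := Set.finite_Icc _ _
      have hdisj : Disjoint
          ((AddSubmonoid.closure (Set.Icc m (m + h)) : Set ℕ) ∩ Set.Icc 0 (k * m + k * h))
          (Set.Icc ((k+1) * m) ((k+1) * m + j)) := by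
        rw [Set.disjoint_left]
        rintro n ⟨-, -, hn2⟩ ⟨hn3, -⟩
        omega
      rw [Set.ncard_union_eq hdisj hfin1 hfin2, ihv]
      have : (Set.Icc ((k+1) * m) ((k+1) * m + j)).ncard = j + 1 := by
        rw [show Set.Icc ((k+1)*m) ((k+1)*m+j) = ↑(Finset.Icc ((k+1)*m) ((k+1)*m+j)) by simp,
          Set.ncard_coe_finset, Nat.card_Icc]
        omega
      rw [this]
      simp only [triN]
      have : h * (triN k + k) = h * triN k + h * k := by ring
      have e3 : h * k = k * h := by ring
      omega

lemma fQ_max (m h lam k : ℕ) (hm : 2 ≤ m)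
    (hA : m ≤ lam * (2 * h) + 2)
    (hB : lam * (2 * h) + 3 ≤ m + 2 * h) :
    (k:ℚ) * m / 2 - k - h * ((k:ℚ) * ((k:ℚ) - 1)) / 2 ≤
      (lam:ℚ) * m / 2 - lam - h * ((lam:ℚ) * ((lam:ℚ) - 1)) / 2 := by
  have hH : (0:ℚ) ≤ h := by positivity
  rcases lt_trichotomy k lam with hlt | rfl | hgt
  · have hc1 : (k:ℚ) + 1 ≤ lam := by exact_mod_cast hlt
    have hc2 : (lam:ℚ) * (2 * h) + 3 ≤ m + 2 * h := by exact_mod_cast hB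
    have h2 : (h:ℚ) * ((lam:ℚ) + k - 1) ≤ (m:ℚ) - 2 := by nlinarith
    have key : ((lam:ℚ) * m / 2 - lam - h * ((lam:ℚ) * ((lam:ℚ) - 1)) / 2)
        - ((k:ℚ) * m / 2 - k - h * ((k:ℚ) * ((k:ℚ) - 1)) / 2)
        = ((lam:ℚ) - k) * (((m:ℚ) - 2) - h * ((lam:ℚ) + k - 1)) / 2 := by ring
    nlinarith [mul_nonneg (by linarith : (0:ℚ) ≤ (lam:ℚ) - k)
      (by linarith : (0:ℚ) ≤ ((m:ℚ) - 2) - h * ((lam:ℚ) + k - 1))]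
  · exact le_refl _
  · have hc1 : (lam:ℚ) + 1 ≤ k := by exact_mod_cast hgt
    have hc3 : (m:ℚ) ≤ (lam:ℚ) * (2 * h) + 2 := by exact_mod_cast hA
    have h2 : (m:ℚ) - 2 ≤ (h:ℚ) * ((lam:ℚ) + k - 1) := by nlinarith
    have key : ((lam:ℚ) * m / 2 - lam - h * ((lam:ℚ) * ((lam:ℚ) - 1)) / 2)
        - ((k:ℚ) * m / 2 - k - h * ((k:ℚ) * ((k:ℚ) - 1)) / 2)
        = ((k:ℚ) - lam) * ((h * ((lam:ℚ) + k - 1)) - ((m:ℚ) - 2)) / 2 := by ring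
    nlinarith [mul_nonneg (by linarith : (0:ℚ) ≤ (k:ℚ) - lam)
      (by linarith : (0:ℚ) ≤ (h * ((lam:ℚ) + k - 1)) - ((m:ℚ) - 2))]

theorem stmt12 (m h : ℕ) (h1 : 1 ≤ h) (h2 : h ≤ m - 1)
    (S : Set ℕ) (hS : S = (AddSubmonoid.closure (Set.Icc m (m + h)) : Set ℕ))
    (lam : ℕ) (hlam : lam = (m - 2 + (2 * h - 1)) / (2 * h)) :
    lam * m ∈ S ∧ lam * m ≤ ngCond S ∧
    (∀ t ∈ S, t ≤ ngCond S → sig S t ≤ sig S (lam * m)) ∧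
    sig S (lam * m) =
      (lam : ℚ) * ((m : ℚ) / 2 - 1) - (h : ℚ) * ((lam : ℚ) * ((lam : ℚ) - 1) / 2) := by
  subst hS
  have hm : 2 ≤ m := by omega
  -- q : minimal with m - 1 ≤ q * h
  have hqex : ∃ k, m - 1 ≤ k * h := ⟨m - 1, by nlinarith⟩
  obtain ⟨q, hq1, hq2⟩ : ∃ q, m - 1 ≤ q * h ∧ ∀ i < q, i * h ≤ m - 2 :=
    ⟨Nat.find hqex, Nat.find_spec hqex, fun i hi => by
      have := Nat.find_min hqex hi; omega⟩
  have hq0 : 1 ≤ q := by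
    rcases Nat.eq_zero_or_pos q with hz | hp
    · rw [hz] at hq1; simp at hq1; omega
    · exact hp
  -- lam facts
  have h2h : 0 < 2 * h := by omega
  have hlam1 : lam * (2 * h) ≤ m - 2 + (2 * h - 1) := by
    rw [hlam]; exact Nat.div_mul_le_self _ _
  have hlam2 : m - 2 + (2 * h - 1) < (lam + 1) * (2 * h) := by
    rw [hlam]; exact (Nat.div_lt_iff_lt_mul h2h).1 (Nat.lt_succ_self _)
  have elam : (lam + 1) * (2 * h) = lam * (2 * h) + 2 * h := by ring
  have hA : m ≤ lam * (2 * h) + 2 := by omega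
  have hB : lam * (2 * h) + 3 ≤ m + 2 * h := by omega
  have hlamq : lam ≤ q := by
    by_contra hc
    push_neg at hc
    have h3 : (q + 1) * (2 * h) ≤ lam * (2 * h) := Nat.mul_le_mul_right _ hc
    have e1 : (q + 1) * (2 * h) = 2 * (q * h) + 2 * h := by ring
    omega
  -- membership of full upper tail
  have hup : ∀ n, q * m ≤ n → n ∈ (AddSubmonoid.closure (Set.Icc m (m + h)) : Set ℕ) := by
    intro n hn
    have hm0 : 0 < m := by omega
    have hk1 : q ≤ n / m := (Nat.le_div_iff_mul_le hm0).2 hn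
    have hk2 : (n / m) * m ≤ n := Nat.div_mul_le_self n m
    have hk3 : n < (n / m) * m + m := by
      have e0 : (n / m) * m = m * (n / m) := by ring
      have := Nat.div_add_mod n m
      have := Nat.mod_lt n hm0
      omega
    refine (memS m h n).2 ⟨n / m, hk2, ?_⟩
    have h4 : q * h ≤ (n / m) * h := Nat.mul_le_mul_right _ hk1
    have e2 : (n / m) * (m + h) = (n / m) * m + (n / m) * h := by ring
    omega
  -- q*m - 1 is not in S
  obtain ⟨q', rfl⟩ : ∃ q', q = q' + 1 := ⟨q - 1, by omega⟩
  have hgap : (q' + 1) * m - 1 ∉ (AddSubmonoid.closure (Set.Icc m (m + h)) : Set ℕ) := by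
    intro hmem
    obtain ⟨k', hk1', hk2'⟩ := (memS m h _).1 hmem
    have hq'm : m ≤ (q' + 1) * m := Nat.le_mul_of_pos_left m (by omega)
    have hk'0 : 1 ≤ k' := by
      rcases Nat.eq_zero_or_pos k' with hz | hp
      · rw [hz] at hk2'; simp at hk2'; omega
      · exact hp
    have hk'q : k' ≤ q' := by
      by_contra hc
      push_neg at hc
      have : (q' + 1) * m ≤ k' * m := Nat.mul_le_mul_right _ hc
      omega
    have h5 : k' * (m + h) ≤ q' * (m + h) := Nat.mul_le_mul_right _ hk'q
    have h6 : q' * h ≤ m - 2 := hq2 q' (by omega)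
    have e3 : q' * (m + h) = q' * m + q' * h := by ring
    have e4 : (q' + 1) * m = q' * m + m := by ring
    omega
  -- value of ngCond
  have hng : ngCond (AddSubmonoid.closure (Set.Icc m (m + h)) : Set ℕ) = (q' + 1) * m := by
    unfold ngCond
    have hmem : (q' + 1) * m ∈ {k : ℕ | ∀ n, k ≤ n → n ∈
        (AddSubmonoid.closure (Set.Icc m (m + h)) : Set ℕ)} := hup
    apply le_antisymm
    · exact Nat.sInf_le hmem
    · apply le_csInf ⟨(q' + 1) * m, hmem⟩
      intro x hx
      by_contra hc
      push_neg at hc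
      exact hgap (hx _ (by omega))
  -- sig value formula
  have sigval : ∀ k j, k ≤ q' + 1 → j ≤ k * h → k * m + j ≤ (q' + 1) * m →
      sig (AddSubmonoid.closure (Set.Icc m (m + h)) : Set ℕ) (k * m + j)
        = (k:ℚ) * m / 2 - k - h * ((k:ℚ) * ((k:ℚ) - 1)) / 2 - j / 2 := by
    intro k j ha hb hcle
    unfold sig
    rw [countLemma m h (q' + 1) hm h1 hq1 hq2 k j ha hb hcle]
    push_cast [triN_cast]
    ring
  have hsl : sig (AddSubmonoid.closure (Set.Icc m (m + h)) : Set ℕ) (lam * m)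
      = (lam:ℚ) * m / 2 - lam - h * ((lam:ℚ) * ((lam:ℚ) - 1)) / 2 := by
    have := sigval lam 0 hlamq (by omega) (by
      have := Nat.mul_le_mul_right m hlamq; omega)
    simpa using this
  refine ⟨?_, ?_, ?_, ?_⟩
  · exact (memS m h _).2 ⟨lam, le_refl _, Nat.mul_le_mul_left _ (by omega)⟩
  · rw [hng]; exact Nat.mul_le_mul_right _ hlamq
  · intro t ht htle
    rw [hng] at htle
    -- decompose t
    obtain ⟨k, j, hka, hkb, hkc, rfl⟩ :
        ∃ k j, k ≤ q' + 1 ∧ j ≤ k * h ∧ k * m + j ≤ (q' + 1) * m ∧ t = k * m + j := by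
      rcases Nat.eq_zero_or_pos t with rfl | htpos
      · exact ⟨0, 0, by omega, by omega, by omega, by omega⟩
      rcases Nat.lt_or_ge t ((q' + 1) * m) with hlt | hge
      · obtain ⟨hd1, hd2, hd3⟩ := canonRep m h t (by omega) htpos ht
        refine ⟨t / m, t - (t / m) * m, ?_, ?_, by omega, by omega⟩
        · have : t / m < q' + 1 := (Nat.div_lt_iff_lt_mul (by omega)).2 hlt
          omega
        · have e5 : (t / m) * (m + h) = (t / m) * m + (t / m) * h := by ring
          omega
      · have : t = (q' + 1) * m := by omega
        exact ⟨q' + 1, 0, le_refl _, by omega, by omega, by omega⟩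
    rw [sigval k j hka hkb hkc, hsl]
    have hfq := fQ_max m h lam k hm hA hB
    have hj0 : (0:ℚ) ≤ (j:ℚ) / 2 := by positivity
    linarith
  · rw [hsl]; ring
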